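/- For every integer n ≥ 0 and every nonzero real θ, the identity ∑_{k=0}^n binom(n,k) (θ^{k-1}-θ)^k θ^{-n(k-1)} = ∑_{k=0}^n binom(n,k) (θ^k-θ)^k θ^{-k(n-1)} holds. -/

import Mathlib

open Finset

lemma term_expand (θ : ℝ) (hθ : θ ≠ 0) (a c : ℤ) (k : ℕ) :
    (θ ^ a - θ) ^ k * θ ^ c
      = ∑ j ∈ range (k + 1),
          (-1 : ℝ) ^ (j + k) * (k.choose j : ℝ) * θ ^ (a * j + ((k : ℤ) - (j : ℤ)) + c) := by
  rw [sub_pow, Finset.sum_mul]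
  refine Finset.sum_congr rfl fun j hj => ?_
  have hjk : j ≤ k := by simpa [Nat.lt_succ_iff] using hj
  have h1 : (θ ^ a) ^ j = θ ^ (a * j) := by rw [zpow_mul, zpow_natCast]
  have h2 : θ ^ ((k : ℤ) - (j : ℤ)) = θ ^ (k - j : ℕ) := by
    rw [← zpow_natCast]; congr 1; omega
  rw [zpow_add₀ hθ, zpow_add₀ hθ, h1, h2]; ring

lemma key_term (n k j : ℕ) (hjk : j ≤ k) (hkn : k ≤ n) (θ : ℝ) :
    (n.choose k : ℝ) * ((-1 : ℝ) ^ (j + k) * (k.choose j : ℝ)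
        * θ ^ (((k : ℤ) - 1) * j + ((k : ℤ) - (j : ℤ)) + -(n : ℤ) * ((k : ℤ) - 1)))
      = (n.choose (n - j) : ℝ) * ((-1 : ℝ) ^ ((n - k) + (n - j)) * ((n - j).choose (n - k) : ℝ)
        * θ ^ (((n - j : ℕ) : ℤ) * ((n - k : ℕ) : ℤ)
            + (((n - j : ℕ) : ℤ) - ((n - k : ℕ) : ℤ))
            + -((n - j : ℕ) : ℤ) * ((n : ℤ) - 1))) := by
  have hc1 : ((n - j : ℕ) : ℤ) = (n : ℤ) - j := by omega
  have hc2 : ((n - k : ℕ) : ℤ) = (n : ℤ) - k := by omega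
  have hexp : ((n - j : ℕ) : ℤ) * ((n - k : ℕ) : ℤ)
      + (((n - j : ℕ) : ℤ) - ((n - k : ℕ) : ℤ)) + -((n - j : ℕ) : ℤ) * ((n : ℤ) - 1)
      = ((k : ℤ) - 1) * j + ((k : ℤ) - (j : ℤ)) + -(n : ℤ) * ((k : ℤ) - 1) := by
    rw [hc1, hc2]; ring
  have hsign : ((-1 : ℝ)) ^ ((n - k) + (n - j)) = (-1 : ℝ) ^ (j + k) := by
    have hpar : ((n - k) + (n - j)) + (j + k) = 2 * n := by omega
    rcases Nat.even_or_odd (j + k) with h | h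
    · have h2 : Even ((n - k) + (n - j)) := by
        rcases h with ⟨m, hm⟩; exact ⟨n - m, by omega⟩
      rw [h.neg_one_pow, h2.neg_one_pow]
    · have h2 : Odd ((n - k) + (n - j)) := by
        rcases h with ⟨m, hm⟩; exact ⟨n - m - 1, by omega⟩
      rw [h.neg_one_pow, h2.neg_one_pow]
  have hcoef : (n.choose (n - j)) * ((n - j).choose (n - k)) = n.choose k * k.choose j := by
    have e1 : n.choose (n - j) = n.choose j := Nat.choose_symm (hjk.trans hkn)
    have e2 : (n - j).choose (n - k) = (n - j).choose (k - j) := by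
      rw [show n - k = (n - j) - (k - j) by omega]
      exact Nat.choose_symm (by omega)
    rw [e1, e2, Nat.choose_mul hjk]
  have hcoefR : ((n.choose (n - j)) : ℝ) * (((n - j).choose (n - k)) : ℝ)
      = (n.choose k : ℝ) * (k.choose j : ℝ) := by exact_mod_cast congrArg Nat.cast hcoef
  rw [hexp, hsign]
  set X := θ ^ (((k : ℤ) - 1) * j + ((k : ℤ) - (j : ℤ)) + -(n : ℤ) * ((k : ℤ) - 1)) with hX
  linear_combination (-(-1 : ℝ) ^ (j + k) * X) * hcoefR

theorem binomial_zpow_identity (n : ℕ) (θ : ℝ) (hθ : θ ≠ 0) :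
    ∑ k ∈ Finset.range (n + 1),
        (n.choose k : ℝ) * (θ ^ ((k : ℤ) - 1) - θ) ^ k * θ ^ (-(n : ℤ) * ((k : ℤ) - 1))
      = ∑ k ∈ Finset.range (n + 1),
        (n.choose k : ℝ) * (θ ^ (k : ℤ) - θ) ^ k * θ ^ (-(k : ℤ) * ((n : ℤ) - 1)) := by
  have hL : ∀ k ∈ range (n + 1),
      (n.choose k : ℝ) * (θ ^ ((k : ℤ) - 1) - θ) ^ k * θ ^ (-(n : ℤ) * ((k : ℤ) - 1))
        = ∑ j ∈ range (k + 1), (n.choose k : ℝ) * ((-1 : ℝ) ^ (j + k) * (k.choose j : ℝ)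
            * θ ^ (((k : ℤ) - 1) * j + ((k : ℤ) - (j : ℤ)) + -(n : ℤ) * ((k : ℤ) - 1))) := by
    intro k _
    rw [mul_assoc, term_expand θ hθ _ _ k, Finset.mul_sum]
  have hR : ∀ k ∈ range (n + 1),
      (n.choose k : ℝ) * (θ ^ (k : ℤ) - θ) ^ k * θ ^ (-(k : ℤ) * ((n : ℤ) - 1))
        = ∑ j ∈ range (k + 1), (n.choose k : ℝ) * ((-1 : ℝ) ^ (j + k) * (k.choose j : ℝ)
            * θ ^ ((k : ℤ) * j + ((k : ℤ) - (j : ℤ)) + -(k : ℤ) * ((n : ℤ) - 1))) := by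
    intro k _
    rw [mul_assoc, term_expand θ hθ _ _ k, Finset.mul_sum]
  rw [Finset.sum_congr rfl hL, Finset.sum_congr rfl hR,
    Finset.sum_sigma' (range (n + 1)) (fun k => range (k + 1)),
    Finset.sum_sigma' (range (n + 1)) (fun k => range (k + 1))]
  refine Finset.sum_nbij' (fun p => ⟨n - p.2, n - p.1⟩) (fun p => ⟨n - p.2, n - p.1⟩)
    ?_ ?_ ?_ ?_ ?_
  · rintro ⟨k, j⟩ hp
    simp only [Finset.mem_sigma, Finset.mem_range] at hp ⊢
    omega
  · rintro ⟨k, j⟩ hp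
    simp only [Finset.mem_sigma, Finset.mem_range] at hp ⊢
    omega
  · rintro ⟨k, j⟩ hp
    simp only [Finset.mem_sigma, Finset.mem_range] at hp
    simp only [Sigma.mk.inj_iff]
    constructor <;> [omega; exact heq_of_eq (by omega)]
  · rintro ⟨k, j⟩ hp
    simp only [Finset.mem_sigma, Finset.mem_range] at hp
    simp only [Sigma.mk.inj_iff]
    constructor <;> [omega; exact heq_of_eq (by omega)]
  · rintro ⟨k, j⟩ hp
    simp only [Finset.mem_sigma, Finset.mem_range] at hp
    have hjk : j ≤ k := by omega
    have hkn : k ≤ n := by omega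
    have := key_term n k j hjk hkn θ
    simpa using this
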